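/- Quantitative implicit function theorem: Let f : ℝ^d → ℝ be a C² function, U ⊆ ℝ^d open, x ∈ U, and let k > λ > 0 be constants. Assume f(x) = 0, x + [-1,1]^d ⊆ U, ‖∇f(x)‖ > λ, and sup_{y ∈ U} ‖∇f(y)‖ + sup_{y ∈ U} ‖Hess f(y)‖ ≤ k. Then, setting ε = λ² / (4 k² d^{3/2}), there exist an index i ∈ {1,…,d} and a C² function φ : ℝ^{d-1} → ℝ such that for all y ∈ x + [-ε,ε]^d, f(y) = 0 if and only if y_i = φ(y_1,…,ŷ_i,…,y_d) (where ŷ_i denotes omission of the i-th coordinate). -/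

import Mathlib

open scoped RealInnerProductSpace

open Filter Set
set_option maxHeartbeats 4000000
noncomputable section

def embL (d : ℕ) (i : Fin d) : (({j : Fin d // j ≠ i} → ℝ) × ℝ) →L[ℝ] EuclideanSpace ℝ (Fin d) :=
  LinearMap.toContinuousLinearMap
  { toFun := fun p => WithLp.toLp 2 (fun j => if h : j = i then p.2 else p.1 ⟨j, h⟩)
    map_add' := fun p q => by ext j; by_cases h : j = i <;> simp [h]
    map_smul' := fun c p => by ext j; by_cases h : j = i <;> simp [h] }

variable {d : ℕ}

lemma embL_apply (i : Fin d) (p : ({j : Fin d // j ≠ i} → ℝ) × ℝ) (j : Fin d) :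
    embL d i p j = if h : j = i then p.2 else p.1 ⟨j, h⟩ := rfl

lemma embL_proj (i : Fin d) (y : EuclideanSpace ℝ (Fin d)) :
    embL d i (fun j => y j.1, y i) = y := by
  ext j
  rw [embL_apply]
  by_cases h : j = i
  · subst h; simp
  · simp [h]

lemma embL_single (i : Fin d) : embL d i (0, 1) = EuclideanSpace.single i (1:ℝ) := by
  ext j
  rw [embL_apply, EuclideanSpace.single_apply]
  by_cases h : j = i <;> simp [h]

lemma embL_decomp (i : Fin d) (z : {j : Fin d // j ≠ i} → ℝ) (t : ℝ) :
    embL d i (z, t) = embL d i (z, 0) + t • embL d i (0, 1) := by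
  rw [← (embL d i).map_smul, ← (embL d i).map_add]
  congr 1
  simp

lemma norm_le_sqrt_card_sub {i : Fin d} {v : EuclideanSpace ℝ (Fin d)} {r : ℝ} (hr : 0 ≤ r)
    (hvi : v i = 0) (h : ∀ j, |v j| ≤ r) : ‖v‖ ≤ Real.sqrt ((d:ℝ) - 1) * r := by
  have hd : 1 ≤ d := Nat.one_le_iff_ne_zero.2 (by rintro rfl; exact i.elim0)
  rw [EuclideanSpace.norm_eq]
  have hsum : ∑ j, ‖v j‖ ^ 2 = ∑ j ∈ Finset.univ.erase i, ‖v j‖ ^ 2 := by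
    rw [← Finset.sum_erase_add _ _ (Finset.mem_univ i), hvi]
    simp
  calc Real.sqrt (∑ j, ‖v j‖ ^ 2) ≤ Real.sqrt (∑ _j ∈ Finset.univ.erase i, r ^ 2) := by
        rw [hsum]
        apply Real.sqrt_le_sqrt
        apply Finset.sum_le_sum
        intro j _
        have := h j
        rw [Real.norm_eq_abs]
        nlinarith [abs_nonneg (v j)]
    _ ≤ Real.sqrt ((d:ℝ) - 1) * r := by
        rw [Finset.sum_const, Finset.card_erase_of_mem (Finset.mem_univ i),
          Finset.card_univ, Fintype.card_fin, nsmul_eq_mul]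
        rw [Real.sqrt_mul' _ (by positivity), Real.sqrt_sq hr]
        have : ((d-1:ℕ):ℝ) = (d:ℝ) - 1 := by rw [Nat.cast_sub hd]; simp
        rw [this]

private lemma key_ineq {k m u : ℝ} (hk : 0 < k) (hm0 : 0 < m) (hmu : 27/32 * m ≤ m - u)
    (h2ku : 2 * k * u ≤ 5/8 * m ^ 2) : u < (m - u) ^ 2 / (2 * k) := by
  rw [lt_div_iff₀ (by positivity)]
  nlinarith [sq_nonneg (m - u)]


lemma implicit_contDiffAt {P : Type*} [NormedAddCommGroup P] [NormedSpace ℝ P]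
    [CompleteSpace P]
    {h : P × ℝ → ℝ} (hh : ContDiff ℝ 2 h) {z₁ : P} {t₁ : ℝ} {φ : P → ℝ}
    (hroot : h (z₁, t₁) = 0) (hb : fderiv ℝ h (z₁, t₁) (0, 1) ≠ 0)
    (huniq : ∀ᶠ p : P × ℝ in nhds (z₁, t₁), h p = 0 → φ p.1 = p.2) :
    ContDiffAt ℝ 2 φ z₁ := by
  have hdiff : Differentiable ℝ h := hh.differentiable (by norm_num)
  set L : (P × ℝ) →L[ℝ] ℝ := fderiv ℝ h (z₁, t₁) with hL
  set b : ℝ := L (0, 1) with hbdef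
  have hLsplit : ∀ u : P, ∀ t : ℝ, L (u, t) = L (u, 0) + t * b := by
    intro u t
    have h1 : (u, t) = (u, (0:ℝ)) + (0, t) := by simp
    have h2 : ((0:P), t) = t • ((0:P), (1:ℝ)) := by simp
    rw [h1, map_add, h2, map_smul]
    simp [mul_comm, ← hbdef]
  -- the derivative as a continuous linear equiv
  set A : (P × ℝ) →L[ℝ] (P × ℝ) :=
    (ContinuousLinearMap.fst ℝ P ℝ).prod L with hA
  set Ainv : (P × ℝ) →L[ℝ] (P × ℝ) :=
    (ContinuousLinearMap.fst ℝ P ℝ).prod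
      (b⁻¹ • (ContinuousLinearMap.snd ℝ P ℝ -
        L.comp ((ContinuousLinearMap.fst ℝ P ℝ).prod 0))) with hAinv
  have hAapp : ∀ p : P × ℝ, A p = (p.1, L p) := fun p => rfl
  have hAinvapp : ∀ q : P × ℝ, Ainv q = (q.1, b⁻¹ * (q.2 - L (q.1, 0))) := fun q => rfl
  have hleft : ∀ p : P × ℝ, Ainv (A p) = p := by
    intro ⟨z, t⟩
    rw [hAapp, hAinvapp]
    simp only
    rw [hLsplit z t]
    field_simp
    simp [hb]
  have hright : ∀ q : P × ℝ, A (Ainv q) = q := by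
    intro ⟨u, s⟩
    rw [hAinvapp, hAapp]
    simp only
    rw [hLsplit u (b⁻¹ * (s - L (u, 0)))]
    field_simp
    simp
  set Aeq : (P × ℝ) ≃L[ℝ] (P × ℝ) := ContinuousLinearEquiv.equivOfInverse A Ainv hleft hright
    with hAeq
  set F : P × ℝ → P × ℝ := fun p => (p.1, h p) with hF
  have hA' : HasFDerivAt F (Aeq : (P × ℝ) →L[ℝ] (P × ℝ)) (z₁, t₁) := by
    have : (Aeq : (P × ℝ) →L[ℝ] (P × ℝ)) = A := rfl
    rw [this, hA]
    exact (hasFDerivAt_fst).prodMk (hdiff (z₁, t₁)).hasFDerivAt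
  have hFc : ContDiffAt ℝ 2 F (z₁, t₁) := (contDiffAt_fst).prodMk hh.contDiffAt
  have hn : (2 : WithTop ℕ∞) ≠ 0 := by norm_num
  set inv : P × ℝ → P × ℝ := hFc.localInverse hA' hn with hinv
  have hFp : F (z₁, t₁) = (z₁, 0) := by simp [hF, hroot]
  have hsmooth : ContDiffAt ℝ 2 inv (z₁, 0) := by
    rw [← hFp]; exact hFc.to_localInverse hA' hn
  have hS : HasStrictFDerivAt F (Aeq : (P × ℝ) →L[ℝ] (P × ℝ)) (z₁, t₁) :=
    hFc.hasStrictFDerivAt' hA' hn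
  have hri : ∀ᶠ q in nhds (z₁, (0:ℝ)), F (inv q) = q := by
    have := hS.eventually_right_inverse
    rw [hFp] at this
    exact this
  have hcont : Tendsto inv (nhds (z₁, (0:ℝ))) (nhds (z₁, t₁)) := by
    have := hS.localInverse_tendsto
    rw [hFp] at this
    exact this
  have hev : ∀ᶠ q in nhds (z₁, (0:ℝ)), h (inv q) = 0 → φ (inv q).1 = (inv q).2 :=
    hcont.eventually huniq
  have hkey : ∀ᶠ q in nhds (z₁, (0:ℝ)), q.2 = 0 → φ q.1 = (inv q).2 := by
    filter_upwards [hri, hev] with q h1 h2 hq2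
    have e1 : (inv q).1 = q.1 := (Prod.ext_iff.1 h1).1
    have e2 : h (inv q) = q.2 := (Prod.ext_iff.1 h1).2
    have : φ (inv q).1 = (inv q).2 := h2 (by rw [e2, hq2])
    rwa [e1] at this
  have hmap : Tendsto (fun z : P => (z, (0:ℝ))) (nhds z₁) (nhds (z₁, (0:ℝ))) :=
    (Continuous.prodMk continuous_id continuous_const).continuousAt
  have hfin : ∀ᶠ z in nhds z₁, φ z = (inv (z, 0)).2 := by
    filter_upwards [hmap.eventually hkey] with z hz using hz rfl
  have hψ : ContDiffAt ℝ 2 (fun z : P => (inv (z, 0)).2) z₁ := by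
    have h1 : ContDiffAt ℝ 2 (fun z : P => (z, (0:ℝ))) z₁ :=
      (contDiffAt_id).prodMk contDiffAt_const
    have h2 : ContDiffAt ℝ 2 (fun z : P => inv (z, (0:ℝ))) z₁ :=
      ContDiffAt.comp (g := inv) (f := fun z : P => (z, (0:ℝ))) z₁ hsmooth h1
    exact contDiffAt_snd.comp _ h2
  exact hψ.congr_of_eventuallyEq hfin

open Set in
private lemma slice_root {g Dg : ℝ → ℝ} {t₀ m u k δ : ℝ} (hk : 0 < k) (hδ0 : 0 < δ)
    (hkδ : k * δ = m - u) (hcen : |g t₀| ≤ u)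
    (hder : ∀ t, HasDerivAt g (Dg t) t)
    (hDlow : ∀ t, |t - t₀| ≤ δ → m - u - k * |t - t₀| < Dg t)
    (hgcont : Continuous g)
    (hkey : u < (m - u) ^ 2 / (2 * k)) :
    StrictMonoOn g (Icc (t₀ - δ) (t₀ + δ)) ∧ ∃ t ∈ Ioo (t₀ - δ) (t₀ + δ), g t = 0 := by
  have hmono : StrictMonoOn g (Icc (t₀ - δ) (t₀ + δ)) := by
    apply strictMonoOn_of_hasDerivWithinAt_pos (convex_Icc _ _) hgcont.continuousOn
      (f' := Dg)
    · intro t _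
      exact (hder t).hasDerivWithinAt
    · intro t ht
      rw [interior_Icc] at ht
      have h1 : |t - t₀| < δ := abs_sub_lt_iff.2 ⟨by linarith [ht.2], by linarith [ht.1]⟩
      have h2 := hDlow t h1.le
      have h3 := mul_lt_mul_of_pos_left h1 hk
      rw [hkδ] at h3
      linarith
  refine ⟨hmono, ?_⟩
  have hgain : (m - u) * δ - k * δ ^ 2 / 2 = (m - u) ^ 2 / (2 * k) := by
    have : δ = (m - u) / k := by field_simp at hkδ ⊢; linarith [hkδ]
    rw [this]; field_simp; ring
  have h5 := abs_le.1 hcen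
  have hupper : 0 < g (t₀ + δ) := by
    have hG : StrictMonoOn (fun r => g (t₀ + r) - ((m - u) * r - k * r ^ 2 / 2)) (Icc 0 δ) := by
      apply strictMonoOn_of_hasDerivWithinAt_pos (convex_Icc _ _)
        (Continuous.continuousOn ((hgcont.comp (continuous_const.add continuous_id)).sub
          (((continuous_const.mul continuous_id).sub
            ((continuous_const.mul (continuous_pow 2)).div_const 2)))))
        (f' := fun r => Dg (t₀ + r) - ((m - u) - k * r))
      · intro r _
        have h1 : HasDerivAt (fun r : ℝ => g (t₀ + r)) (Dg (t₀ + r)) r := by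
          exact HasDerivAt.comp_const_add t₀ r (hder (t₀ + r))
        have hp : HasDerivAt (fun s : ℝ => k * s ^ 2 / 2) (k * r) r := by
          have hfun : (fun s : ℝ => k * s ^ 2 / 2) = fun s : ℝ => k / 2 * s ^ 2 := by
            funext s; ring
          rw [hfun]
          exact ((hasDerivAt_pow 2 r).const_mul (k / 2)).congr_deriv (by push_cast; ring)
        have hlin : HasDerivAt (fun s : ℝ => (m - u) * s) (m - u) r := by
          simpa using (hasDerivAt_id r).const_mul (m - u)
        exact (h1.sub (hlin.sub hp)).hasDerivWithinAt
      · intro r hr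
        rw [interior_Icc] at hr
        have h1 : |t₀ + r - t₀| ≤ δ := by
          rw [show t₀ + r - t₀ = r by ring, abs_of_pos hr.1]; exact hr.2.le
        have h2 := hDlow (t₀ + r) h1
        rw [show t₀ + r - t₀ = r by ring, abs_of_pos hr.1] at h2
        linarith
    have h3 := hG (Set.left_mem_Icc.2 hδ0.le) (Set.right_mem_Icc.2 hδ0.le) hδ0
    norm_num at h3
    linarith [h3, hgain, hkey]
  have hlowerpt : g (t₀ - δ) < 0 := by
    have hG : StrictMonoOn (fun r => g (t₀ + r) - ((m - u) * r + k * r ^ 2 / 2)) (Icc (-δ) 0) := by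
      apply strictMonoOn_of_hasDerivWithinAt_pos (convex_Icc _ _)
        (Continuous.continuousOn ((hgcont.comp (continuous_const.add continuous_id)).sub
          (((continuous_const.mul continuous_id).add
            ((continuous_const.mul (continuous_pow 2)).div_const 2)))))
        (f' := fun r => Dg (t₀ + r) - ((m - u) + k * r))
      · intro r _
        have h1 : HasDerivAt (fun r : ℝ => g (t₀ + r)) (Dg (t₀ + r)) r := by
          exact HasDerivAt.comp_const_add t₀ r (hder (t₀ + r))
        have hp : HasDerivAt (fun s : ℝ => k * s ^ 2 / 2) (k * r) r := by
          have hfun : (fun s : ℝ => k * s ^ 2 / 2) = fun s : ℝ => k / 2 * s ^ 2 := by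
            funext s; ring
          rw [hfun]
          exact ((hasDerivAt_pow 2 r).const_mul (k / 2)).congr_deriv (by push_cast; ring)
        have hlin : HasDerivAt (fun s : ℝ => (m - u) * s) (m - u) r := by
          simpa using (hasDerivAt_id r).const_mul (m - u)
        exact (h1.sub (hlin.add hp)).hasDerivWithinAt
      · intro r hr
        rw [interior_Icc] at hr
        have h1 : |t₀ + r - t₀| ≤ δ := by
          rw [show t₀ + r - t₀ = r by ring, abs_of_neg hr.2]; linarith [hr.1]
        have h2 := hDlow (t₀ + r) h1
        rw [show t₀ + r - t₀ = r by ring, abs_of_neg hr.2] at h2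
        have h4 : k * -r = -(k * r) := by ring
        rw [h4] at h2
        linarith
    have h3 := hG (Set.left_mem_Icc.2 (by linarith)) (Set.right_mem_Icc.2 (by linarith))
      (by linarith : -δ < 0)
    norm_num at h3
    have h6 : t₀ + -δ = t₀ - δ := by ring
    rw [h6] at h3
    linarith [h3, hgain, hkey]
  have hIVT := intermediate_value_Icc (by linarith : t₀ - δ ≤ t₀ + δ) hgcont.continuousOn
  have h0mem : (0:ℝ) ∈ Icc (g (t₀ - δ)) (g (t₀ + δ)) := ⟨hlowerpt.le, hupper.le⟩
  obtain ⟨t, htIcc, ht0⟩ := hIVT h0mem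
  refine ⟨t, ⟨?_, ?_⟩, ht0⟩
  · rcases lt_or_eq_of_le htIcc.1 with h | h
    · exact h
    · exfalso; rw [← h] at ht0; rw [ht0] at hlowerpt; exact lt_irrefl 0 hlowerpt
  · rcases lt_or_eq_of_le htIcc.2 with h | h
    · exact h
    · exfalso; rw [h] at ht0; rw [ht0] at hupper; exact lt_irrefl 0 hupper


theorem aux_graph (d : ℕ) (f : EuclideanSpace ℝ (Fin d) → ℝ) (hf : ContDiff ℝ 2 f)
    (x : EuclideanSpace ℝ (Fin d)) (k lam : ℝ) (hlam : 0 < lam) (hklam : lam < k)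
    (hf0 : f x = 0) (i : Fin d)
    (hder : lam / Real.sqrt d < fderiv ℝ f x (EuclideanSpace.single i 1))
    (hgb : ∀ y : EuclideanSpace ℝ (Fin d), (∀ j, |y j - x j| ≤ 1) → ‖fderiv ℝ f y‖ ≤ k)
    (hHb : ∀ y : EuclideanSpace ℝ (Fin d), (∀ j, |y j - x j| ≤ 1) →
      ‖fderiv ℝ (fderiv ℝ f) y‖ ≤ k) :
    ∃ φ : ({j : Fin d // j ≠ i} → ℝ) → ℝ, ContDiff ℝ 2 φ ∧
      ∀ y : EuclideanSpace ℝ (Fin d),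
        (∀ j, |y j - x j| ≤ lam ^ 2 / (4 * k ^ 2 * (d : ℝ) ^ ((3 : ℝ) / 2))) →
        (f y = 0 ↔ y i = φ (fun j => y j.1)) := by
  have hd1 : 1 ≤ d := Nat.one_le_iff_ne_zero.2 (by rintro rfl; exact i.elim0)
  have hk : 0 < k := hlam.trans hklam
  obtain ⟨s, hs⟩ : ∃ s : ℝ, s = Real.sqrt d := ⟨_, rfl⟩
  have hs1 : 1 ≤ s := by
    rw [hs, show (1:ℝ) = Real.sqrt 1 by simp]
    exact Real.sqrt_le_sqrt (by exact_mod_cast hd1)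
  have hs0 : 0 < s := lt_of_lt_of_le one_pos hs1
  have hss : s ^ 2 = d := by rw [hs]; exact Real.sq_sqrt (by positivity)
  obtain ⟨τ, hτ⟩ : ∃ τ : ℝ, τ = Real.sqrt ((d:ℝ) - 1) := ⟨_, rfl⟩
  have hd1' : (1:ℝ) ≤ (d:ℝ) := by exact_mod_cast hd1
  have hττ : τ ^ 2 = (d:ℝ) - 1 := by rw [hτ]; exact Real.sq_sqrt (by linarith)
  have hτ0 : 0 ≤ τ := by rw [hτ]; exact Real.sqrt_nonneg _
  have hτs : τ ≤ s := by
    rw [hτ, hs]; exact Real.sqrt_le_sqrt (by linarith)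
  have hτd : 2 * τ ≤ s ^ 2 := by nlinarith [sq_nonneg (τ^2 - 1), sq_nonneg (τ - 1)]
  have hrpow : (d : ℝ) ^ ((3 : ℝ) / 2) = s ^ 3 := by
    rw [hs, Real.sqrt_eq_rpow, ← Real.rpow_natCast ((d:ℝ) ^ ((1:ℝ)/2)) 3,
      ← Real.rpow_mul (by positivity)]
    norm_num
  obtain ⟨ε, hε⟩ : ∃ ε : ℝ, ε = lam ^ 2 / (4 * k ^ 2 * s ^ 3) := ⟨_, rfl⟩
  have hεeq : lam ^ 2 / (4 * k ^ 2 * (d : ℝ) ^ ((3 : ℝ) / 2)) = ε := by rw [hε, hrpow]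
  have hε0 : 0 < ε := by rw [hε]; positivity
  obtain ⟨ε', hε'⟩ : ∃ e : ℝ, e = 5/4 * ε := ⟨_, rfl⟩
  obtain ⟨m, hm⟩ : ∃ m : ℝ, m = lam / s := ⟨_, rfl⟩
  have hm0 : 0 < m := by rw [hm]; positivity
  have hmlam : m ≤ lam := by
    rw [hm]; rw [div_le_iff₀ hs0]; nlinarith
  obtain ⟨u, hu⟩ : ∃ u : ℝ, u = k * ε' * τ := ⟨_, rfl⟩
  have hueq : u * (16 * k * s ^ 3) = 5 * lam ^ 2 * τ * (k * k⁻¹) := by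
    rw [hu, hε', hε]; field_simp; ring
  have hueq' : u * (16 * k * s ^ 3) = 5 * lam ^ 2 * τ := by
    rw [hueq, mul_inv_cancel₀ (ne_of_gt hk), mul_one]
  have hu0 : 0 ≤ u := by rw [hu, hε', hε]; positivity
  -- u ≤ (5/32) m
  have hum : u ≤ 5/32 * m := by
    rw [hm]
    rw [← mul_le_mul_iff_of_pos_right (show (0:ℝ) < 16 * k * s ^ 3 by positivity)]
    calc u * (16 * k * s ^ 3) = 5 * lam ^ 2 * τ := hueq'
      _ ≤ 5/32 * (lam / s) * (16 * k * s ^ 3) := by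
          have h1 : τ ≤ s ^ 2 / 2 := by linarith
          have h2 : 5 * lam ^ 2 * τ ≤ 5 * lam ^ 2 * (s ^ 2 / 2) := by nlinarith
          have h3 : 5/32 * (lam / s) * (16 * k * s ^ 3) = 5/2 * lam * k * s ^ 2 := by
            field_simp; ring
          rw [h3]
          have h4 : lam ^ 2 ≤ lam * k := by nlinarith
          nlinarith [h2, mul_le_mul_of_nonneg_right h4 (sq_nonneg s)]
  have h2ku : 2 * k * u ≤ 5/8 * m ^ 2 := by
    rw [hm, div_pow]
    rw [← mul_le_mul_iff_of_pos_right (show (0:ℝ) < 8 * s ^ 3 by positivity)]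
    have h1 : 2 * k * u * (8 * s ^ 3) = u * (16 * k * s ^ 3) := by ring
    rw [h1, hueq']
    have h2 : 5/8 * (lam ^ 2 / s ^ 2) * (8 * s ^ 3) = 5 * lam ^ 2 * s := by
      field_simp
    rw [h2]
    nlinarith
  obtain ⟨δ, hδ⟩ : ∃ δ : ℝ, δ = (m - u) / k := ⟨_, rfl⟩
  have hmu : 27/32 * m ≤ m - u := by linarith
  have hδ0 : 0 < δ := by rw [hδ]; apply div_pos; linarith; exact hk
  have hδ1 : δ ≤ 1 := by
    rw [hδ, div_le_one hk]
    have : m ≤ k := by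
      rw [hm, div_le_iff₀ hs0]; nlinarith
    linarith
  have hε14 : ε ≤ 1/4 := by
    rw [hε, div_le_iff₀ (by positivity)]
    have h1 : lam ^ 2 ≤ k ^ 2 := by nlinarith
    have h2 : (1:ℝ) ≤ s ^ 3 := by nlinarith
    nlinarith
  have hε'1 : ε' ≤ 1 := by rw [hε']; linarith
  have hεδ : ε ≤ δ := by
    rw [hε, hδ, div_le_div_iff₀ (by positivity) hk]
    have h1 : 27/32 * m * (4 * k ^ 2 * s ^ 3) = 27/8 * lam * k ^ 2 * s ^ 2 := by
      rw [hm]; field_simp; ring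
    have h2 : lam ^ 2 * k ≤ 27/8 * lam * k ^ 2 * s ^ 2 := by
      have ha : lam * (lam * k) ≤ k * (lam * k) := mul_le_mul_of_nonneg_right hklam.le (by positivity)
      have hb : (1:ℝ) ≤ s ^ 2 := by nlinarith
      nlinarith [ha, mul_le_mul_of_nonneg_left hb (show (0:ℝ) ≤ lam * k ^ 2 by positivity)]
    calc lam ^ 2 * k ≤ 27/8 * lam * k ^ 2 * s ^ 2 := h2
      _ = 27/32 * m * (4 * k ^ 2 * s ^ 3) := h1.symm
      _ ≤ (m - u) * (4 * k ^ 2 * s ^ 3) :=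
          mul_le_mul_of_nonneg_right hmu (by positivity)
  -- KEY gain inequality
  have hkey : u < (m - u) ^ 2 / (2 * k) := key_ineq hk hm0 hmu h2ku
  -- differentiability
  have hdf : Differentiable ℝ f := hf.differentiable (by norm_num)
  have hdf' : Differentiable ℝ (fderiv ℝ f) :=
    (hf.fderiv_right (m := 1) (by norm_num)).differentiable (by norm_num)
  have hconv : Convex ℝ {y : EuclideanSpace ℝ (Fin d) | ∀ j, |y j - x j| ≤ 1} := by
    intro y hy w hw a b ha hb hab
    intro j
    have hyj := hy j
    have hwj := hw j
    have happ : (a • y + b • w) j = a * y j + b * w j := rfl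
    show |(a • y + b • w) j - x j| ≤ 1
    rw [happ]
    have e : a * y j + b * w j - x j = a * (y j - x j) + b * (w j - x j) := by
      linear_combination (x j) * hab
    rw [e]
    calc |a * (y j - x j) + b * (w j - x j)|
        ≤ |a * (y j - x j)| + |b * (w j - x j)| := abs_add_le _ _
      _ = a * |y j - x j| + b * |w j - x j| := by
          rw [abs_mul, abs_mul, abs_of_nonneg ha, abs_of_nonneg hb]
      _ ≤ a * 1 + b * 1 :=
          add_le_add (mul_le_mul_of_nonneg_left hyj ha) (mul_le_mul_of_nonneg_left hwj hb)
      _ = 1 := by rw [mul_one, mul_one, hab]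
  have hxcube : ∀ j, |x j - x j| ≤ 1 := by intro j; simp
  have hMVTf : ∀ y y' : EuclideanSpace ℝ (Fin d), (∀ j, |y j - x j| ≤ 1) →
      (∀ j, |y' j - x j| ≤ 1) → |f y' - f y| ≤ k * ‖y' - y‖ := by
    intro y y' hy hy'
    have := Convex.norm_image_sub_le_of_norm_fderiv_le
      (f := f) (s := {p : EuclideanSpace ℝ (Fin d) | ∀ j, |p j - x j| ≤ 1}) (C := k)
      (fun p _ => hdf p) (fun p hp => hgb p hp) hconv hy hy'
    rwa [Real.norm_eq_abs] at this
  have hMVTD : ∀ y y' : EuclideanSpace ℝ (Fin d), (∀ j, |y j - x j| ≤ 1) →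
      (∀ j, |y' j - x j| ≤ 1) → ‖fderiv ℝ f y' - fderiv ℝ f y‖ ≤ k * ‖y' - y‖ :=
    fun y y' hy hy' => Convex.norm_image_sub_le_of_norm_fderiv_le
      (f := fderiv ℝ f) (s := {p : EuclideanSpace ℝ (Fin d) | ∀ j, |p j - x j| ≤ 1}) (C := k)
      (fun p _ => hdf' p) (fun p hp => hHb p hp) hconv hy hy'
  -- derivative of slice maps
  have hderiv : ∀ (z : {j : Fin d // j ≠ i} → ℝ) (t : ℝ),
      HasDerivAt (fun r => f (embL d i (z, r)))
        (fderiv ℝ f (embL d i (z, t)) (EuclideanSpace.single i 1)) t := by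
    intro z t
    have h1 : HasDerivAt (fun r : ℝ => embL d i (z, r)) (embL d i (0, 1)) t := by
      have h2 : HasDerivAt (fun r : ℝ => embL d i (z, 0) + r • embL d i (0, 1))
          ((1:ℝ) • embL d i (0, 1)) t := ((hasDerivAt_id t).smul_const _).const_add _
      rw [one_smul] at h2
      have hfun : (fun r : ℝ => embL d i (z, r))
          = fun r : ℝ => embL d i (z, 0) + r • embL d i (0, 1) :=
        funext fun r => embL_decomp i z r
      rw [hfun]
      exact h2
    have h3 := (hdf (embL d i (z, t))).hasFDerivAt.comp_hasDerivAt t h1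
    rwa [embL_single] at h3
  -- cube membership of region points
  have hmem : ∀ (z : {j : Fin d // j ≠ i} → ℝ) (t : ℝ), (∀ j, |z j - x j.1| ≤ ε') →
      |t - x i| ≤ δ → (∀ j, |embL d i (z, t) j - x j| ≤ 1) := by
    intro z t hz ht j
    rw [embL_apply]
    by_cases h : j = i
    · subst h; rw [dif_pos rfl]; linarith
    · rw [dif_neg h]; exact le_trans (hz ⟨j, h⟩) hε'1
  have hnormv : ∀ z : {j : Fin d // j ≠ i} → ℝ, (∀ j, |z j - x j.1| ≤ ε') →
      ‖embL d i (z, x i) - x‖ ≤ τ * ε' := by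
    intro z hz
    have h0 : (0:ℝ) ≤ ε' := by rw [hε']; linarith
    have := norm_le_sqrt_card_sub (i := i) (v := embL d i (z, x i) - x) (r := ε') h0
      (by show embL d i (z, x i) i - x i = 0
          rw [embL_apply, dif_pos rfl, sub_self]) ?_
    · rw [← hτ] at this; exact this
    · intro j
      have happ : (embL d i (z, x i) - x) j = embL d i (z, x i) j - x j := rfl
      rw [happ, embL_apply]
      by_cases h : j = i
      · subst h; rw [dif_pos rfl]; simp [h0]
      · rw [dif_neg h]; exact hz ⟨j, h⟩
  have hcenter : ∀ z : {j : Fin d // j ≠ i} → ℝ, (∀ j, |z j - x j.1| ≤ ε') →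
      |f (embL d i (z, x i))| ≤ u := by
    intro z hz
    have h1 := hMVTf x (embL d i (z, x i)) hxcube
      (hmem z (x i) hz (by simp [abs_nonneg, hδ0.le]))
    rw [hf0, sub_zero] at h1
    calc |f (embL d i (z, x i))| ≤ k * ‖embL d i (z, x i) - x‖ := h1
      _ ≤ k * (τ * ε') := by
          have := hnormv z hz
          exact mul_le_mul_of_nonneg_left this hk.le
      _ = u := by rw [hu]; ring
  have hsing : ‖EuclideanSpace.single i (1:ℝ)‖ = 1 := by
    rw [EuclideanSpace.norm_single]; norm_num
  have hDlow : ∀ (z : {j : Fin d // j ≠ i} → ℝ) (t : ℝ), (∀ j, |z j - x j.1| ≤ ε') →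
      |t - x i| ≤ δ →
      m - u - k * |t - x i| < fderiv ℝ f (embL d i (z, t)) (EuclideanSpace.single i 1) := by
    intro z t hz ht
    have hyx : ‖embL d i (z, t) - x‖ ≤ τ * ε' + |t - x i| := by
      have h1 : embL d i (z, t) - embL d i (z, x i) = (t - x i) • embL d i (0, 1) := by
        rw [embL_decomp i z t, embL_decomp i z (x i), sub_smul]
        abel
      have h2 : ‖embL d i (z, t) - embL d i (z, x i)‖ = |t - x i| := by
        rw [h1, norm_smul, embL_single, hsing, Real.norm_eq_abs, mul_one]
      calc ‖embL d i (z, t) - x‖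
          ≤ ‖embL d i (z, t) - embL d i (z, x i)‖ + ‖embL d i (z, x i) - x‖ :=
            norm_sub_le_norm_sub_add_norm_sub _ _ _
        _ ≤ |t - x i| + τ * ε' := by
            rw [h2]; exact add_le_add le_rfl (hnormv z hz)
        _ = τ * ε' + |t - x i| := by ring
    have hDD : ‖fderiv ℝ f (embL d i (z, t)) - fderiv ℝ f x‖ ≤ k * (τ * ε' + |t - x i|) :=
      le_trans (hMVTD x (embL d i (z, t)) hxcube (hmem z t hz ht))
        (mul_le_mul_of_nonneg_left hyx hk.le)
    have happ : |fderiv ℝ f (embL d i (z, t)) (EuclideanSpace.single i 1)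
        - fderiv ℝ f x (EuclideanSpace.single i 1)| ≤ k * (τ * ε' + |t - x i|) := by
      have h3 := (fderiv ℝ f (embL d i (z, t)) - fderiv ℝ f x).le_opNorm
        (EuclideanSpace.single i (1:ℝ))
      rw [hsing, mul_one, ContinuousLinearMap.sub_apply, Real.norm_eq_abs] at h3
      exact le_trans h3 hDD
    have hder' : m < fderiv ℝ f x (EuclideanSpace.single i 1) := by
      rw [hm, hs]; exact hder
    have hexp : k * (τ * ε' + |t - x i|) = u + k * |t - x i| := by rw [hu]; ring
    rw [hexp] at happ
    have := abs_le.1 happ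
    linarith [this.1, this.2]
  -- the slice analysis
  have hkδ : k * δ = m - u := by
    rw [hδ]; field_simp
  have hslice : ∀ z : {j : Fin d // j ≠ i} → ℝ, (∀ j, |z j - x j.1| ≤ ε') →
      (StrictMonoOn (fun t => f (embL d i (z, t))) (Icc (x i - δ) (x i + δ)) ∧
       ∃ t ∈ Ioo (x i - δ) (x i + δ), f (embL d i (z, t)) = 0) := by
    intro z hz
    have hgcont : Continuous (fun t : ℝ => f (embL d i (z, t))) :=
      hf.continuous.comp ((embL d i).continuous.comp (continuous_const.prodMk continuous_id))
    exact slice_root hk hδ0 hkδ (hcenter z hz) (hderiv z)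
      (fun t ht => hDlow z t hz ht) hgcont hkey
  -- the implicit function, via choice
  obtain ⟨φtot, hφtot⟩ : ∃ φtot : ({j : Fin d // j ≠ i} → ℝ) → ℝ,
      ∀ z, (∀ j, |z j - x j.1| ≤ ε') →
        (f (embL d i (z, φtot z)) = 0 ∧ φtot z ∈ Set.Ioo (x i - δ) (x i + δ) ∧
         ∀ t ∈ Set.Icc (x i - δ) (x i + δ), f (embL d i (z, t)) = 0 → t = φtot z) := by
    classical
    refine ⟨fun z => if H : ∃ t, t ∈ Set.Icc (x i - δ) (x i + δ) ∧ f (embL d i (z, t)) = 0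
      then H.choose else 0, ?_⟩
    intro z hz
    obtain ⟨hmono, t, htIoo, ht0⟩ := hslice z hz
    have hex : ∃ t', t' ∈ Set.Icc (x i - δ) (x i + δ) ∧ f (embL d i (z, t')) = 0 :=
      ⟨t, Set.Ioo_subset_Icc_self htIoo, ht0⟩
    simp only [dif_pos hex]
    obtain ⟨hc1, hc2⟩ := hex.choose_spec
    have hct : hex.choose = t :=
      hmono.injOn hc1 (Set.Ioo_subset_Icc_self htIoo) (by rw [hc2, ht0])
    refine ⟨hc2, by rw [hct]; exact htIoo, ?_⟩
    intro t' ht' h0'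
    exact hmono.injOn ht' hc1 (by rw [h0', hc2])
  -- positivity of the partial derivative at interior roots
  have hDpos : ∀ (z : {j : Fin d // j ≠ i} → ℝ) (t : ℝ), (∀ j, |z j - x j.1| ≤ ε') →
      |t - x i| < δ →
      0 < fderiv ℝ f (embL d i (z, t)) (EuclideanSpace.single i 1) := by
    intro z t hz ht
    have h2 := hDlow z t hz ht.le
    have h3 := mul_lt_mul_of_pos_left ht hk
    rw [hkδ] at h3
    linarith
  -- smoothness of φtot on the open region
  have hsm : ∀ z₁ : {j : Fin d // j ≠ i} → ℝ, (∀ j, |z₁ j - x j.1| < ε') →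
      ContDiffAt ℝ 2 φtot z₁ := by
    intro z₁ hz₁
    have hz₁' : ∀ j, |z₁ j - x j.1| ≤ ε' := fun j => (hz₁ j).le
    obtain ⟨h0, hIoo, _⟩ := hφtot z₁ hz₁'
    have habs : |φtot z₁ - x i| < δ := abs_sub_lt_iff.2 ⟨by linarith [hIoo.2], by linarith [hIoo.1]⟩
    apply implicit_contDiffAt (h := fun p => f (embL d i p))
      (hf.comp (embL d i).contDiff) h0
    · -- nonvanishing derivative
      have hfd : fderiv ℝ (fun p => f (embL d i p)) (z₁, φtot z₁)
          = (fderiv ℝ f (embL d i (z₁, φtot z₁))).comp (embL d i) := by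
        rw [show (fun p => f (embL d i p)) = f ∘ (embL d i) from rfl,
          fderiv_comp _ (hdf _) (embL d i).differentiableAt, ContinuousLinearMap.fderiv]
      rw [hfd]
      have : (fderiv ℝ f (embL d i (z₁, φtot z₁))).comp (embL d i) (0, 1)
          = fderiv ℝ f (embL d i (z₁, φtot z₁)) (EuclideanSpace.single i 1) := by
        rw [ContinuousLinearMap.comp_apply, embL_single]
      rw [this]
      exact (hDpos z₁ (φtot z₁) hz₁' habs).ne'
    · -- local uniqueness
      have hopen : IsOpen {z : {j : Fin d // j ≠ i} → ℝ | ∀ j, |z j - x j.1| < ε'} := by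
        have he : {z : {j : Fin d // j ≠ i} → ℝ | ∀ j, |z j - x j.1| < ε'}
            = ⋂ j, {z | |z j - x j.1| < ε'} := by
          ext w; simp [Set.mem_iInter]
        rw [he]
        exact isOpen_iInter_of_finite fun j =>
          isOpen_Iio.preimage (((continuous_apply j).sub continuous_const).abs)
      have hmemO : (z₁, φtot z₁) ∈ ({z : {j : Fin d // j ≠ i} → ℝ | ∀ j, |z j - x j.1| < ε'}
          ×ˢ Set.Ioo (x i - δ) (x i + δ)) := ⟨hz₁, hIoo⟩
      filter_upwards [(hopen.prod isOpen_Ioo).mem_nhds hmemO] with p hp hp0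
      obtain ⟨_, _, huniq'⟩ := hφtot p.1 (fun j => (hp.1 j).le)
      exact (huniq' p.2 (Set.Ioo_subset_Icc_self hp.2)
        (by rw [show (p.1, p.2) = p from rfl]; exact hp0)).symm
  -- the bump function
  have hεε' : ε < ε' := by rw [hε']; linarith
  obtain ⟨ρ, hρIn, hρOut⟩ : ∃ ρ : ContDiffBump (0:ℝ), ρ.rIn = ε ∧ ρ.rOut = (ε + ε')/2 :=
    ⟨⟨ε, (ε + ε')/2, hε0, by linarith⟩, rfl, rfl⟩
  -- the cutoff function
  have hχsm : ∀ (s : Finset {j : Fin d // j ≠ i}),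
      ContDiff ℝ 2 (fun z : {j : Fin d // j ≠ i} → ℝ => ∏ j ∈ s, ρ (z j - x j.1)) := by
    intro s
    induction s using Finset.induction_on with
    | empty => simpa using contDiff_const
    | insert _ _ hne ih =>
      simp only [Finset.prod_insert hne]
      exact ContDiff.mul (ρ.contDiff.comp
        ((contDiff_apply ℝ ℝ _).sub contDiff_const)) ih
  have hχ1 : ∀ z : {j : Fin d // j ≠ i} → ℝ, (∀ j, |z j - x j.1| ≤ ε) →
      (∏ j, ρ (z j - x j.1)) = 1 := by
    intro z hz
    apply Finset.prod_eq_one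
    intro j _
    apply ρ.one_of_mem_closedBall
    rw [Metric.mem_closedBall, Real.dist_0_eq_abs, hρIn]
    exact hz j
  have hχ0 : ∀ z : {j : Fin d // j ≠ i} → ℝ, ¬(∀ j, |z j - x j.1| ≤ (ε + ε')/2) →
      (∏ j, ρ (z j - x j.1)) = 0 := by
    intro z hz
    push_neg at hz
    obtain ⟨j, hj⟩ := hz
    exact Finset.prod_eq_zero (Finset.mem_univ j)
      (ρ.zero_of_le_dist (by rw [Real.dist_0_eq_abs, hρOut]; exact hj.le))
  refine ⟨fun z => (∏ j, ρ (z j - x j.1)) * φtot z, ?_, ?_⟩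
  · -- global smoothness
    rw [contDiff_iff_contDiffAt]
    intro z₀
    by_cases hcase : ∀ j, |z₀ j - x j.1| ≤ (ε + ε')/2
    · exact ((hχsm Finset.univ).contDiffAt).mul
        (hsm z₀ (fun j => lt_of_le_of_lt (hcase j) (by linarith)))
    · have hBopen : IsOpen {z : {j : Fin d // j ≠ i} → ℝ | ¬∀ j, |z j - x j.1| ≤ (ε + ε')/2} := by
        have he : {z : {j : Fin d // j ≠ i} → ℝ | ¬∀ j, |z j - x j.1| ≤ (ε + ε')/2}
            = (⋂ j, {z | |z j - x j.1| ≤ (ε + ε')/2})ᶜ := by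
          ext w; simp [Set.mem_iInter]
        rw [he]
        exact (isClosed_iInter fun j =>
          IsClosed.preimage (((continuous_apply j).sub continuous_const).abs) isClosed_Iic).isOpen_compl
      exact contDiffAt_const.congr_of_eventuallyEq
        (Filter.eventuallyEq_of_mem (hBopen.mem_nhds hcase)
          (fun w hw => by rw [hχ0 w hw, zero_mul]))
  · -- the characterization of the zero set
    intro y hy
    simp only [hεeq] at hy
    have hzε : ∀ j : {j : Fin d // j ≠ i}, |(fun j : {j : Fin d // j ≠ i} => y j.1) j - x j.1| ≤ ε :=
      fun j => hy j.1
    have hzε' : ∀ j : {j : Fin d // j ≠ i}, |(fun j : {j : Fin d // j ≠ i} => y j.1) j - x j.1| ≤ ε' :=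
      fun j => le_trans (hzε j) hεε'.le
    obtain ⟨h0, hIoo, huniq⟩ := hφtot _ hzε'
    have hemb : embL d i (fun j => y j.1, y i) = y := embL_proj i y
    have hχz : (∏ j, ρ ((fun j : {j : Fin d // j ≠ i} => y j.1) j - x j.1)) = 1 := hχ1 _ hzε
    constructor
    · intro hfy
      have hyIcc : y i ∈ Set.Icc (x i - δ) (x i + δ) := by
        have := abs_le.1 (le_trans (hy i) hεδ)
        constructor <;> linarith [this.1, this.2]
      have := huniq (y i) hyIcc (by rw [hemb]; exact hfy)
      show y i = _ * _
      rw [hχz, one_mul]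
      exact this
    · intro hyi
      rw [show ((fun z => (∏ j, ρ (z j - x j.1)) * φtot z) (fun j => y j.1))
        = (∏ j, ρ ((fun j : {j : Fin d // j ≠ i} => y j.1) j - x j.1))
          * φtot (fun j => y j.1) from rfl, hχz, one_mul] at hyi
      have : f (embL d i (fun j => y j.1, y i)) = 0 := by rw [hyi]; exact h0
      rwa [hemb] at this


/-- Quantitative implicit function theorem. -/
theorem stmt_2 (d : ℕ) (f : EuclideanSpace ℝ (Fin d) → ℝ) (hf : ContDiff ℝ 2 f)
    (U : Set (EuclideanSpace ℝ (Fin d))) (hU : IsOpen U)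
    (x : EuclideanSpace ℝ (Fin d)) (hx : x ∈ U)
    (k lam : ℝ) (hlam : 0 < lam) (hklam : lam < k)
    (hf0 : f x = 0)
    (hcube : {y : EuclideanSpace ℝ (Fin d) | ∀ j, |y j - x j| ≤ 1} ⊆ U)
    (hgrad : lam < ‖gradient f x‖)
    (hC1 : ∀ y ∈ U, ∀ z ∈ U, ‖gradient f y‖ + ‖fderiv ℝ (fderiv ℝ f) z‖ ≤ k) :
    ∃ i : Fin d, ∃ φ : ({j : Fin d // j ≠ i} → ℝ) → ℝ, ContDiff ℝ 2 φ ∧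
      ∀ y : EuclideanSpace ℝ (Fin d),
        (∀ j, |y j - x j| ≤ lam ^ 2 / (4 * k ^ 2 * (d : ℝ) ^ ((3 : ℝ) / 2))) →
        (f y = 0 ↔ y i = φ (fun j => y j.1)) := by
  have hgradnorm : ∀ y, ‖gradient f y‖ = ‖fderiv ℝ f y‖ := fun y =>
    (InnerProductSpace.toDual ℝ (EuclideanSpace ℝ (Fin d))).symm.norm_map (fderiv ℝ f y)
  have hgb : ∀ y : EuclideanSpace ℝ (Fin d), (∀ j, |y j - x j| ≤ 1) → ‖fderiv ℝ f y‖ ≤ k := by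
    intro y hy
    rw [← hgradnorm]
    have h1 := hC1 y (hcube hy) y (hcube hy)
    have h2 := norm_nonneg (fderiv ℝ (fderiv ℝ f) y)
    linarith
  have hHb : ∀ y : EuclideanSpace ℝ (Fin d), (∀ j, |y j - x j| ≤ 1) →
      ‖fderiv ℝ (fderiv ℝ f) y‖ ≤ k := by
    intro y hy
    have h1 := hC1 x hx y (hcube hy)
    have h2 := norm_nonneg (gradient f x)
    linarith
  -- d is positive
  have hd : 0 < d := by
    rcases Nat.eq_zero_or_pos d with h | h
    · exfalso
      subst h
      have hg0 : gradient f x = 0 := Subsingleton.elim _ _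
      rw [hg0, norm_zero] at hgrad
      linarith
    · exact h
  -- choose a coordinate with large gradient component
  obtain ⟨i, hi⟩ : ∃ i : Fin d, ‖gradient f x‖ ≤ Real.sqrt d * |gradient f x i| := by
    by_contra hcon
    push_neg at hcon
    have hnormsq : ‖gradient f x‖ ^ 2 = ∑ j, ‖gradient f x j‖ ^ 2 := by
      rw [EuclideanSpace.norm_eq, Real.sq_sqrt (by positivity)]
    have hlt : ∀ j : Fin d, ‖gradient f x j‖ ^ 2 < ‖gradient f x‖ ^ 2 / d := by
      intro j
      have h1 := hcon j
      have hs0 : (0:ℝ) < Real.sqrt d := Real.sqrt_pos.2 (by exact_mod_cast hd)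
      have h3 : |gradient f x j| < ‖gradient f x‖ / Real.sqrt d := by
        rw [lt_div_iff₀ hs0]
        have := hcon j
        nlinarith [abs_nonneg (gradient f x j)]
      have h4 : (0:ℝ) ≤ |gradient f x j| := abs_nonneg _
      have h5 : Real.sqrt d ^ 2 = d := Real.sq_sqrt (by positivity)
      rw [Real.norm_eq_abs]
      calc |gradient f x j| ^ 2 < (‖gradient f x‖ / Real.sqrt d) ^ 2 := by nlinarith
        _ = ‖gradient f x‖ ^ 2 / d := by rw [div_pow, h5]
    have hsum : ∑ j, ‖gradient f x j‖ ^ 2 < ∑ _j : Fin d, ‖gradient f x‖ ^ 2 / d := by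
      apply Finset.sum_lt_sum_of_nonempty
      · exact Finset.univ_nonempty_iff.2 ⟨⟨0, hd⟩⟩
      · intro j _; exact hlt j
    rw [Finset.sum_const, Finset.card_univ, Fintype.card_fin, nsmul_eq_mul] at hsum
    rw [mul_div_cancel₀ _ (by positivity : (d:ℝ) ≠ 0)] at hsum
    rw [hnormsq] at hsum
    exact lt_irrefl _ hsum
  have hs0 : (0:ℝ) < Real.sqrt d := Real.sqrt_pos.2 (by exact_mod_cast hd)
  have hderi : lam / Real.sqrt d < |gradient f x i| := by
    rw [div_lt_iff₀ hs0]
    calc lam < ‖gradient f x‖ := hgrad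
      _ ≤ Real.sqrt d * |gradient f x i| := hi
      _ = |gradient f x i| * Real.sqrt d := mul_comm _ _
  -- the derivative in direction i is the i-th gradient coordinate
  have hcoord : fderiv ℝ f x (EuclideanSpace.single i 1) = gradient f x i := by
    have h1 : fderiv ℝ f x = InnerProductSpace.toDual ℝ _ (gradient f x) :=
      ((InnerProductSpace.toDual ℝ _).apply_symm_apply (fderiv ℝ f x)).symm
    rw [h1, InnerProductSpace.toDual_apply_apply]
    have := EuclideanSpace.inner_single_right (𝕜 := ℝ) i 1 (gradient f x)
    rw [this]
    simp
  rcases abs_cases (gradient f x i) with ⟨habs, _⟩ | ⟨habs, _⟩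
  · -- positive case
    refine ⟨i, ?_⟩
    apply aux_graph d f hf x k lam hlam hklam hf0 i _ hgb hHb
    rw [hcoord, ← habs]
    exact hderi
  · -- negative case : apply to -f
    have hfneg : (fun y : EuclideanSpace ℝ (Fin d) => -(fderiv ℝ f y))
        = fderiv ℝ (fun y => -f y) := funext fun y => (fderiv_fun_neg (f := f) (x := y)).symm
    obtain ⟨φ, hφ1, hφ2⟩ := aux_graph d (fun y => -f y) hf.neg x k lam hlam hklam
      (by show -(f x) = 0; rw [hf0, neg_zero]) i
      (by rw [fderiv_fun_neg, ContinuousLinearMap.neg_apply, hcoord, ← habs]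
          exact hderi)
      (by intro y hy
          rw [fderiv_fun_neg, norm_neg]
          exact hgb y hy)
      (by intro y hy
          rw [← hfneg]
          have hpn : (fun y => -(fderiv ℝ f y)) = -(fderiv ℝ f) := rfl
          rw [hpn, fderiv_neg]
          exact (norm_neg (fderiv ℝ (fderiv ℝ f) y)).le.trans (hHb y hy))
    refine ⟨i, φ, hφ1, ?_⟩
    intro y hy
    rw [← hφ2 y hy, neg_eq_zero]
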